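/- arXiv:2509.10194 — 2 statements merged into one kernel-verified Lean document; each statement's English description precedes it below -/
import Mathlib

section
/- Let (Ω,Σ,μ) be a σ-finite measure space, let K ⊆ L¹(μ) be nonempty, bounded in L¹-norm, closed, convex, and measure-compact (every sequence in K has a subsequence converging locally in measure to an element of K), and let H ⊆ K be a nonempty convex subset with diam(H) > 0. Then the set C(H) of Chebyshev centers of H, taken over centers in K, is nonempty, bounded, closed and convex. -/
open MeasureTheory Filter Set Topology
open scoped ENNReal NNReal

noncomputable section

variable {α : Type*} [MeasurableSpace α]

/-- Uniform integrability of a family in `L¹(μ)` in the sense of the paper: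
(i) uniform absolute continuity of the integrals, and (ii) uniformly small tails. -/
def UnifInt (μ : Measure α) (F : Set (Lp ℝ 1 μ)) : Prop :=
  (∀ ε : ℝ, 0 < ε → ∃ δ : ℝ, 0 < δ ∧ ∀ E : Set α, MeasurableSet E →
      μ E < ENNReal.ofReal δ → ∀ f ∈ F, ∫ x in E, |f x| ∂μ < ε) ∧
  (∀ ε : ℝ, 0 < ε → ∃ M : ℝ, 0 < M ∧ ∀ f ∈ F, ∫ x in {x | M < |f x|}, |f x| ∂μ < ε)

/-- A sequence in `L¹(μ)` converges locally in measure to `g : α → ℝ`. -/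
def TendstoLocInMeasure (μ : Measure α) (f : ℕ → Lp ℝ 1 μ) (g : α → ℝ) : Prop :=
  ∀ E : Set α, MeasurableSet E → μ E < ⊤ → ∀ ε : ℝ, 0 < ε →
    Tendsto (fun n => μ {x | x ∈ E ∧ ε < |f n x - g x|}) atTop (𝓝 0)

/-- A set `K ⊆ L¹(μ)` is measure-compact: every sequence in `K` has a subsequence
converging locally in measure to an element of `K`. -/
def MeasCompact (μ : Measure α) (K : Set (Lp ℝ 1 μ)) : Prop :=
  ∀ f : ℕ → Lp ℝ 1 μ, (∀ n, f n ∈ K) →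
    ∃ g ∈ K, ∃ φ : ℕ → ℕ, StrictMono φ ∧ TendstoLocInMeasure μ (fun k => f (φ k)) ⇑g

/-- The set of Chebyshev centers of `H` taken over centers in `K`: minimizers over `K`
of the radius functional `z ↦ sup_{x ∈ H} ‖x − z‖₁`. -/
def ChebyshevCentersOver (μ : Measure α) (K H : Set (Lp ℝ 1 μ)) : Set (Lp ℝ 1 μ) :=
  {c | c ∈ K ∧ ∀ z ∈ K, (⨆ x ∈ H, dist x c) ≤ ⨆ x ∈ H, dist x z}

lemma key_aux {μ : Measure α} [SigmaFinite μ]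
    (z : ℕ → Lp ℝ 1 μ) (g : Lp ℝ 1 μ) (hz : TendstoLocInMeasure μ z ⇑g)
    (x : Lp ℝ 1 μ) (C : ℝ≥0∞) (hC : ∀ k, eLpNorm (⇑x - ⇑(z k)) 1 μ ≤ C) :
    eLpNorm (⇑x - ⇑g) 1 μ ≤ C := by
  set S := spanningSets μ with hS
  -- Step A
  have stepA : ∀ n : ℕ, eLpNorm (⇑x - ⇑g) 1 (μ.restrict (S n)) ≤ C := by
    intro n
    have hSm : MeasurableSet (S n) := measurableSet_spanningSets μ n
    have htm : TendstoInMeasure (μ.restrict (S n)) (fun k => ⇑(z k)) atTop ⇑g := by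
      rw [tendstoInMeasure_iff_dist]
      intro ε hε
      have h := hz (S n) hSm (measure_spanningSets_lt_top μ n) (ε/2) (half_pos hε)
      refine tendsto_of_tendsto_of_tendsto_of_le_of_le tendsto_const_nhds h
        (fun k => zero_le) (fun k => ?_)
      rw [Measure.restrict_apply' hSm]
      refine measure_mono fun a ha => ?_
      obtain ⟨h1, h2⟩ := ha
      refine ⟨h2, lt_of_lt_of_le (half_lt_self hε) ?_⟩
      simpa [Real.dist_eq] using h1
    obtain ⟨ns, hns, hae⟩ := htm.exists_seq_tendsto_ae
    have hlsc := Lp.eLpNorm_lim_le_liminf_eLpNorm (p := 1) (μ := μ.restrict (S n))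
      (f := fun j => ⇑x - ⇑(z (ns j)))
      (fun j => ((Lp.aestronglyMeasurable x).sub (Lp.aestronglyMeasurable (z (ns j)))).restrict)
      (⇑x - ⇑g)
      (by filter_upwards [hae] with a ha
          simpa using tendsto_const_nhds.sub ha)
    refine hlsc.trans ?_
    calc liminf (fun j => eLpNorm (⇑x - ⇑(z (ns j))) 1 (μ.restrict (S n))) atTop
        ≤ liminf (fun _ : ℕ => C) atTop :=
          liminf_le_liminf (Eventually.of_forall fun j =>
            (eLpNorm_mono_measure _ Measure.restrict_le_self).trans (hC (ns j)))
      _ = C := liminf_const C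
  -- Step B
  rw [eLpNorm_one_eq_lintegral_enorm]
  set F : α → ℝ≥0∞ := fun a => (‖(⇑x - ⇑g) a‖₊ : ℝ≥0∞) with hF
  have hFm : AEMeasurable F μ :=
    ((Lp.aestronglyMeasurable x).sub (Lp.aestronglyMeasurable g)).enorm
  have hmono : ∀ a : α, Monotone fun n => (S n).indicator F a := fun a i j hij =>
    Set.indicator_le_indicator_of_subset (monotone_spanningSets μ hij) (fun _ => zero_le) a
  have hsup : ∀ a, (⨆ n, (S n).indicator F a) = F a := by
    intro a
    have : a ∈ ⋃ n, S n := by rw [hS, iUnion_spanningSets]; trivial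
    obtain ⟨n, hn⟩ := mem_iUnion.mp this
    refine le_antisymm (iSup_le fun m => Set.indicator_le_self _ _ a)
      (le_iSup_of_le n ?_)
    rw [Set.indicator_of_mem hn]
  calc ∫⁻ a, ‖(⇑x - ⇑g) a‖₊ ∂μ = ∫⁻ a, ⨆ n, (S n).indicator F a ∂μ := by
        simp_rw [hsup]
        rfl
    _ = ⨆ n, ∫⁻ a, (S n).indicator F a ∂μ :=
        lintegral_iSup' (fun n => hFm.indicator (measurableSet_spanningSets μ n))
          (ae_of_all _ hmono)
    _ ≤ C := by
        refine iSup_le fun n => ?_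
        rw [lintegral_indicator (measurableSet_spanningSets μ n)]
        have := stepA n
        rwa [eLpNorm_one_eq_lintegral_enorm] at this

/-- for a nonempty convex `H ⊆ K` of positive diameter, with `K` nonempty,
bounded, closed, convex and measure-compact, the set of Chebyshev centers of `H` over `K`
is nonempty, bounded, closed and convex. -/
theorem chebyshevCenters_nonempty_bounded_closed_convex
    (μ : Measure α) [SigmaFinite μ]
    (K : Set (Lp ℝ 1 μ)) (hne : K.Nonempty) (hbdd : Bornology.IsBounded K)
    (hclosed : IsClosed K) (hconv : Convex ℝ K) (hmc : MeasCompact μ K)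
    (H : Set (Lp ℝ 1 μ)) (hHK : H ⊆ K) (hHne : H.Nonempty) (hHconv : Convex ℝ H)
    (hHdiam : 0 < Metric.diam H) :
    (ChebyshevCentersOver μ K H).Nonempty ∧
    Bornology.IsBounded (ChebyshevCentersOver μ K H) ∧
    IsClosed (ChebyshevCentersOver μ K H) ∧
    Convex ℝ (ChebyshevCentersOver μ K H) := by
  obtain ⟨C0, hC0⟩ := isBounded_iff_forall_norm_le.mp hbdd
  obtain ⟨x0, hx0⟩ := hHne
  set r : Lp ℝ 1 μ → ℝ := fun z => ⨆ x ∈ H, dist x z with hrdef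
  have hub : ∀ z : Lp ℝ 1 μ, BddAbove (range fun x : Lp ℝ 1 μ => ⨆ _ : x ∈ H, dist x z) := by
    intro z
    refine ⟨max 0 (C0 + ‖z‖), ?_⟩
    rintro y ⟨x, rfl⟩
    refine Real.iSup_le (fun hx => le_max_of_le_right ?_) (le_max_left 0 _)
    exact (dist_le_norm_add_norm x z).trans (add_le_add (hC0 x (hHK hx)) le_rfl)
  have hrle : ∀ (z : Lp ℝ 1 μ) (c : ℝ), 0 ≤ c → (∀ x ∈ H, dist x z ≤ c) → r z ≤ c :=
    fun z c hc h => Real.iSup_le (fun x => Real.iSup_le (h x) hc) hc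
  have hler : ∀ (z : Lp ℝ 1 μ), ∀ x ∈ H, dist x z ≤ r z := fun z x hx =>
    le_trans (le_of_eq (ciSup_pos hx : (⨆ _ : x ∈ H, dist x z) = dist x z).symm) (le_ciSup (hub z) x)
  have hr0 : ∀ z, 0 ≤ r z := fun z => le_trans dist_nonneg (hler z x0 hx0)
  have hlip : LipschitzWith 1 r := by
    refine LipschitzWith.of_dist_le_mul fun z1 z2 => ?_
    rw [NNReal.coe_one, one_mul, Real.dist_eq, abs_sub_le_iff]
    constructor
    · have : r z1 ≤ r z2 + dist z1 z2 := by
        refine hrle _ _ (add_nonneg (hr0 z2) dist_nonneg) fun x hx => ?_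
        calc dist x z1 ≤ dist x z2 + dist z2 z1 := dist_triangle x z2 z1
          _ ≤ r z2 + dist z1 z2 := add_le_add (hler z2 x hx) (dist_comm z2 z1).le
      linarith
    · have : r z2 ≤ r z1 + dist z1 z2 := by
        refine hrle _ _ (add_nonneg (hr0 z1) dist_nonneg) fun x hx => ?_
        calc dist x z2 ≤ dist x z1 + dist z1 z2 := dist_triangle x z1 z2
          _ ≤ r z1 + dist z1 z2 := add_le_add (hler z1 x hx) le_rfl
      linarith
  -- set of radii
  have hbddbelow : BddBelow (r '' K) := ⟨0, by rintro y ⟨w, -, rfl⟩; exact hr0 w⟩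
  have himne : (r '' K).Nonempty := hne.image r
  set m := sInf (r '' K) with hm
  have hm0 : 0 ≤ m := le_csInf himne (by rintro y ⟨w, -, rfl⟩; exact hr0 w)
  have hmle : ∀ z ∈ K, m ≤ r z := fun z hz => csInf_le hbddbelow ⟨z, hz, rfl⟩
  -- minimizing sequence
  have hseq : ∀ n : ℕ, ∃ w ∈ K, r w < m + 1 / (n + 1) := by
    intro n
    obtain ⟨y, ⟨w, hwK, rfl⟩, hy⟩ := exists_lt_of_csInf_lt himne
      (lt_add_of_pos_right m (show (0:ℝ) < 1/(n+1) by positivity))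
    exact ⟨w, hwK, hy⟩
  choose z hzK hzlt using hseq
  obtain ⟨g, hgK, φ, hφ, hcv⟩ := hmc z hzK
  have hgmin : ∀ x ∈ H, dist x g ≤ m := by
    intro x hx
    have hxg : eLpNorm (⇑x - ⇑g) 1 μ ≤ ENNReal.ofReal m := by
      refine ENNReal.le_of_forall_pos_le_add fun ε hε _ => ?_
      obtain ⟨N, hN⟩ := exists_nat_one_div_lt (by exact_mod_cast hε : (0:ℝ) < ε)
      have hshift : TendstoLocInMeasure μ (fun k => z (φ (k + N))) ⇑g :=
        fun E hE hEfin δ hδ => (hcv E hE hEfin δ hδ).comp (tendsto_add_atTop_nat N)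
      have hbound : ∀ k, eLpNorm (⇑x - ⇑(z (φ (k + N)))) 1 μ ≤ ENNReal.ofReal (m + ε) := by
        intro k
        have hj : (N : ℝ) + 1 ≤ (φ (k + N) : ℝ) + 1 := by
          have : N ≤ φ (k + N) := le_trans (Nat.le_add_left N k) (hφ.le_apply)
          exact_mod_cast Nat.succ_le_succ this
        have hd : dist x (z (φ (k + N))) ≤ m + ε := by
          have h1 : dist x (z (φ (k + N))) ≤ r (z (φ (k + N))) := hler _ x hx
          have h2 : r (z (φ (k + N))) < m + 1 / ((φ (k + N) : ℝ) + 1) := by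
            exact_mod_cast hzlt (φ (k + N))
          have h3 : 1 / ((φ (k + N) : ℝ) + 1) ≤ 1 / ((N : ℝ) + 1) := by
            apply one_div_le_one_div_of_le (by positivity) hj
          nlinarith [hN]
        have heq : eLpNorm (⇑x - ⇑(z (φ (k + N)))) 1 μ
            = ENNReal.ofReal (dist x (z (φ (k + N)))) := by
          rw [Lp.dist_def, ENNReal.ofReal_toReal]
          rw [eLpNorm_congr_ae (Lp.coeFn_sub x (z (φ (k + N)))).symm]
          exact (Lp.eLpNorm_lt_top (x - z (φ (k + N)))).ne
          -- note: Lp.dist_def: dist f g = (eLpNorm (⇑f - ⇑g) p μ).toReal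
        rw [heq]
        exact ENNReal.ofReal_le_ofReal hd
      calc eLpNorm (⇑x - ⇑g) 1 μ ≤ ENNReal.ofReal (m + ε) :=
            key_aux _ g hshift x _ hbound
        _ = ENNReal.ofReal m + ENNReal.ofReal ε :=
            ENNReal.ofReal_add hm0 (by exact_mod_cast hε.le)
        _ ≤ ENNReal.ofReal m + ε := by
            rw [ENNReal.ofReal_coe_nnreal]
    rw [Lp.dist_def]
    calc (eLpNorm (⇑x - ⇑g) 1 μ).toReal ≤ (ENNReal.ofReal m).toReal :=
          ENNReal.toReal_mono ENNReal.ofReal_ne_top hxg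
      _ = m := ENNReal.toReal_ofReal hm0
  have hgcenter : g ∈ ChebyshevCentersOver μ K H := by
    refine ⟨hgK, fun z' hz' => ?_⟩
    exact le_trans (hrle g m hm0 hgmin) (hmle z' hz')
  refine ⟨⟨g, hgcenter⟩, hbdd.subset (fun c hc => hc.1), ?_, ?_⟩
  · -- closed
    have hset : ChebyshevCentersOver μ K H = K ∩ ⋂ z' ∈ K, {c | r c ≤ r z'} := by
      ext c
      simp only [ChebyshevCentersOver, Set.mem_setOf_eq, Set.mem_inter_iff, Set.mem_iInter]
      exact Iff.rfl
    rw [hset]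
    exact hclosed.inter (isClosed_biInter fun z' _ =>
      isClosed_le hlip.continuous continuous_const)
  · -- convex
    rintro c1 hc1 c2 hc2 a b ha hb hab
    refine ⟨hconv hc1.1 hc2.1 ha hb hab, fun z' hz' => ?_⟩
    show r (a • c1 + b • c2) ≤ r z'
    refine hrle _ _ (hr0 z') fun x hx => ?_
    calc dist x (a • c1 + b • c2) = dist (a • c1 + b • c2) x := dist_comm _ _
      _ ≤ a * dist c1 x + b * dist c2 x :=
          (convexOn_dist x (convex_univ)).2 (Set.mem_univ c1) (Set.mem_univ c2) ha hb hab
      _ = a * dist x c1 + b * dist x c2 := by rw [dist_comm c1 x, dist_comm c2 x]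
      _ ≤ a * r z' + b * r z' := add_le_add
          (mul_le_mul_of_nonneg_left ((hler c1 x hx).trans (hc1.2 z' hz')) ha)
          (mul_le_mul_of_nonneg_left ((hler c2 x hx).trans (hc2.2 z' hz')) hb)
      _ = r z' := by rw [← add_mul, hab, one_mul]
end
end

section
/- Let (Ω,Σ,μ) be a σ-finite measure space and let K ⊆ L¹(μ) be nonempty, bounded in L¹-norm, closed, convex, and measure-compact (every sequence in K has a subsequence converging locally in measure to an element of K). Then every nonexpansive map T : K → K has a fixed point. -/
open MeasureTheory Filter Set Topology

noncomputable section

variable {α : Type*} [MeasurableSpace α]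

section AuxLemmas
open scoped ENNReal NNReal

lemma aux_absCont (μ ν : Measure α) [IsFiniteMeasure ν] (hνμ : ν ≪ μ)
    {ε : ℝ≥0∞} (hε : 0 < ε) :
    ∃ δ : ℝ≥0∞, 0 < δ ∧ ∀ s : Set α, μ s ≤ δ → ν s ≤ ε := by
  by_contra h
  push_neg at h
  have hsel : ∀ n : ℕ, ∃ s : Set α, MeasurableSet s ∧ μ s ≤ (2⁻¹ : ℝ≥0∞) ^ n ∧ ε ≤ ν s := by
    intro n
    obtain ⟨s, hs, hνs⟩ := h ((2⁻¹ : ℝ≥0∞) ^ n) (ENNReal.pow_pos (by norm_num) n)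
    exact ⟨toMeasurable μ s, measurableSet_toMeasurable _ _,
      by rwa [measure_toMeasurable],
      hνs.le.trans (measure_mono (subset_toMeasurable _ _))⟩
  choose s hsm hsμ hsν using hsel
  set U : ℕ → Set α := fun n => ⋃ k, s (n + k) with hU
  have hUanti : Antitone U := by
    intro m n hmn
    refine iUnion_subset fun k => ?_
    have : n + k = m + (n - m + k) := by omega
    rw [this]
    exact subset_iUnion (fun j => s (m + j)) _
  set t : Set α := ⋂ n, U n with ht
  have hμt : μ t = 0 := by
    have hbound : ∀ n, μ t ≤ (2⁻¹ : ℝ≥0∞) ^ n * 2 := by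
      intro n
      calc μ t ≤ μ (U n) := measure_mono (iInter_subset _ n)
        _ ≤ ∑' k, μ (s (n + k)) := measure_iUnion_le _
        _ ≤ ∑' k, (2⁻¹ : ℝ≥0∞) ^ (n + k) := ENNReal.tsum_le_tsum fun k => hsμ _
        _ = (2⁻¹ : ℝ≥0∞) ^ n * ∑' k, (2⁻¹ : ℝ≥0∞) ^ k := by
            simp_rw [pow_add]; rw [ENNReal.tsum_mul_left]
        _ = (2⁻¹ : ℝ≥0∞) ^ n * 2 := by
            rw [ENNReal.tsum_geometric, ENNReal.one_sub_inv_two, inv_inv]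
    have htend : Tendsto (fun n : ℕ => (2⁻¹ : ℝ≥0∞) ^ n * 2) atTop (𝓝 0) := by
      have h1 : Tendsto (fun n : ℕ => (2⁻¹ : ℝ≥0∞) ^ n) atTop (𝓝 0) :=
        ENNReal.tendsto_pow_atTop_nhds_zero_of_lt_one (by norm_num)
      simpa using ENNReal.Tendsto.mul_const h1 (Or.inr ENNReal.ofNat_ne_top)
    exact le_antisymm (ge_of_tendsto' htend hbound) zero_le
  have hνt : ε ≤ ν t := by
    have heq : ν t = ⨅ n, ν (U n) :=
      hUanti.directed_ge.measure_iInter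
        (fun n => (MeasurableSet.iUnion fun k => hsm (n + k)).nullMeasurableSet)
        ⟨0, measure_ne_top ν _⟩
    rw [heq]
    refine le_iInf fun n => (hsν n).trans (measure_mono ?_)
    simpa using subset_iUnion (fun k => s (n + k)) 0
  have : ν t = 0 := hνμ hμt
  exact absurd (hνt.trans this.le) (by simpa using hε.ne')

lemma aux_ae (μ : Measure α) [SigmaFinite μ]
    (f : ℕ → Lp ℝ 1 μ) (g : Lp ℝ 1 μ)
    (h : TendstoLocInMeasure μ f ⇑g) :
    ∃ ψ : ℕ → ℕ, StrictMono ψ ∧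
      ∀ᵐ x ∂μ, Tendsto (fun k => f (ψ k) x) atTop (𝓝 (g x)) := by
  obtain ⟨ν, hfin, hμν, hνμ⟩ := exists_isFiniteMeasure_absolutelyContinuous μ
  have hmeas : TendstoInMeasure ν (fun n => ⇑(f n)) atTop ⇑g := by
    rw [tendstoInMeasure_iff_dist]
    intro ε hε
    rw [ENNReal.tendsto_atTop_zero]
    intro η hη
    obtain ⟨δ, hδpos, hδ⟩ := aux_absCont μ ν hνμ (ENNReal.half_pos hη.ne')
    -- choose k with ν (spanningSets μ k)ᶜ ≤ η / 2
    have hcompl : Tendsto (fun k => ν (spanningSets μ k)ᶜ) atTop (𝓝 0) := by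
      have h0 : (⋂ k, (spanningSets μ k)ᶜ) = (∅ : Set α) := by
        rw [← compl_iUnion, iUnion_spanningSets, compl_univ]
      have := tendsto_measure_iInter_atTop (μ := ν)
        (fun k => (measurableSet_spanningSets μ k).compl.nullMeasurableSet)
        (fun i j hij => compl_subset_compl.2 (monotone_spanningSets μ hij))
        ⟨0, measure_ne_top ν _⟩
      rw [h0, measure_empty] at this
      exact this
    obtain ⟨k0, hk0⟩ := (ENNReal.tendsto_atTop_zero.mp hcompl) (η / 2) (ENNReal.half_pos hη.ne')
    have hk : ν (spanningSets μ k0)ᶜ ≤ η / 2 := hk0 k0 le_rfl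
    -- convergence in μ-measure on the spanning set
    have hB := h (spanningSets μ k0) (measurableSet_spanningSets μ k0)
      (measure_spanningSets_lt_top μ k0) (ε / 2) (half_pos hε)
    obtain ⟨N, hN⟩ := (ENNReal.tendsto_atTop_zero.mp hB) δ hδpos
    refine ⟨N, fun n hn => ?_⟩
    have hsub : {x | ε ≤ dist (f n x) (g x)} ⊆
        {x | x ∈ spanningSets μ k0 ∧ ε / 2 < |f n x - g x|} ∪ (spanningSets μ k0)ᶜ := by
      intro x hx
      by_cases hxS : x ∈ spanningSets μ k0
      · exact Or.inl ⟨hxS, lt_of_lt_of_le (half_lt_self hε) (by simpa [Real.dist_eq] using hx)⟩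
      · exact Or.inr hxS
    calc ν {x | ε ≤ dist (f n x) (g x)}
        ≤ ν ({x | x ∈ spanningSets μ k0 ∧ ε / 2 < |f n x - g x|}) + ν (spanningSets μ k0)ᶜ :=
          (measure_mono hsub).trans (measure_union_le _ _)
      _ ≤ η / 2 + η / 2 := add_le_add (hδ _ (hN n hn)) hk
      _ = η := ENNReal.add_halves η
  obtain ⟨ψ, hψ, hae⟩ := hmeas.exists_seq_tendsto_ae
  exact ⟨ψ, hψ, hμν.ae_le hae⟩

lemma aux_norm_sub (μ : Measure α) (u v : Lp ℝ 1 μ) :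
    ‖u - v‖ = ∫ a, |u a - v a| ∂μ := by
  rw [L1.norm_eq_integral_norm]
  refine integral_congr_ae ?_
  filter_upwards [Lp.coeFn_sub u v] with a ha
  rw [ha, Pi.sub_apply, Real.norm_eq_abs]

lemma aux_approx {E : Type*} [NormedAddCommGroup E] [NormedSpace ℝ E] [CompleteSpace E]
    (K : Set E) (x₀ : E) (hx₀ : x₀ ∈ K) {C : ℝ} (hC : ∀ z ∈ K, ‖z‖ ≤ C)
    (hclosed : IsClosed K) (hconv : Convex ℝ K)
    (T : E → E) (hTmaps : Set.MapsTo T K K)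
    (hTnonexp : ∀ x ∈ K, ∀ y ∈ K, ‖T x - T y‖ ≤ ‖x - y‖)
    {ε : ℝ} (hε : 0 < ε) : ∃ x ∈ K, ‖T x - x‖ < ε := by
  haveI : Nonempty K := ⟨⟨x₀, hx₀⟩⟩
  haveI : CompleteSpace K := hclosed.completeSpace_coe
  have hC0 : 0 ≤ C := le_trans (norm_nonneg x₀) (hC x₀ hx₀)
  set D : ℝ := ‖x₀‖ + C with hD
  have hD0 : 0 ≤ D := add_nonneg (norm_nonneg _) hC0
  set s : ℝ := min (1/2) (ε / (2 * (D + 1))) with hs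
  have hs0 : 0 < s := lt_min (by norm_num) (div_pos hε (by linarith))
  have hs1 : s ≤ 1/2 := min_le_left _ _
  set r : ℝ := 1 - s with hr
  have hr0 : 0 ≤ r := by simp only [hr]; linarith
  have hr1 : r < 1 := by simp only [hr]; linarith
  -- the contraction
  have hmem : ∀ y : K, s • x₀ + r • T y ∈ K := fun y =>
    hconv hx₀ (hTmaps y.2) hs0.le hr0 (by simp [hr])
  set S : K → K := fun y => ⟨s • x₀ + r • T y, hmem y⟩ with hS
  have hlip : LipschitzWith ⟨r, hr0⟩ S := by
    apply LipschitzWith.of_dist_le_mul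
    intro y z
    have : dist (S y : E) (S z : E) = r * dist (T y : E) (T z : E) := by
      simp only [hS, Subtype.coe_mk, dist_add_left, dist_smul₀, Real.norm_eq_abs,
        abs_of_nonneg hr0]
    rw [Subtype.dist_eq, Subtype.dist_eq, this]
    have := hTnonexp y y.2 z z.2
    have hrr : (⟨r, hr0⟩ : ℝ≥0) • dist (y : E) (z : E) = r * dist (y : E) (z : E) := rfl
    rw [dist_eq_norm, dist_eq_norm]
    exact mul_le_mul_of_nonneg_left (by simpa [dist_eq_norm] using this) hr0
  have hcontr : ContractingWith ⟨r, hr0⟩ S := ⟨by exact_mod_cast hr1, hlip⟩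
  set z : K := hcontr.fixedPoint S with hz
  have hfix : S z = z := hcontr.fixedPoint_isFixedPt
  refine ⟨(z : E), z.2, ?_⟩
  have hzeq : s • x₀ + r • T (z : E) = (z : E) := congrArg Subtype.val hfix
  set w : E := T (z : E) with hw
  have hkey : w - (z : E) = s • (w - x₀) := by
    rw [← hzeq, hr]; module
  rw [hkey, norm_smul, Real.norm_eq_abs, abs_of_pos hs0]
  have hbound : ‖T (z : E) - x₀‖ ≤ D := by
    calc ‖T (z : E) - x₀‖ ≤ ‖T (z : E)‖ + ‖x₀‖ := norm_sub_le _ _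
      _ ≤ C + ‖x₀‖ := by gcongr; exact hC _ (hTmaps z.2)
      _ = D := by rw [hD]; ring
  calc s * ‖T (z : E) - x₀‖ ≤ s * D := by gcongr
    _ ≤ (ε / (2 * (D + 1))) * D := by gcongr; exact min_le_right _ _
    _ < ε := by rw [div_mul_eq_mul_div]; rw [div_lt_iff₀ (by linarith)]; nlinarith

lemma aux_abs_int (μ : Measure α) (u v : Lp ℝ 1 μ) :
    Integrable (fun a => |u a - v a|) μ :=
  ((L1.integrable_coeFn (u - v)).congr (Lp.coeFn_sub u v)).abs

end AuxLemmas

/-- fixed points under measure-compactness: every nonexpansive self-map of a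
nonempty, bounded, closed, convex, measure-compact subset of `L¹(μ)` has a fixed point. -/
theorem fixedPoint_of_measureCompact
    (μ : Measure α) [SigmaFinite μ]
    (K : Set (Lp ℝ 1 μ)) (hne : K.Nonempty) (hbdd : Bornology.IsBounded K)
    (hclosed : IsClosed K) (hconv : Convex ℝ K) (hmc : MeasCompact μ K)
    (T : Lp ℝ 1 μ → Lp ℝ 1 μ) (hTmaps : Set.MapsTo T K K)
    (hTnonexp : ∀ x ∈ K, ∀ y ∈ K, ‖T x - T y‖ ≤ ‖x - y‖) :
    ∃ x ∈ K, T x = x := by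
  obtain ⟨x₀, hx₀⟩ := hne
  obtain ⟨C, hC⟩ := hbdd.subset_closedBall 0
  have hCnorm : ∀ z ∈ K, ‖z‖ ≤ C := fun z hz => by
    simpa using hC hz
  have happrox : ∀ n : ℕ, ∃ x ∈ K, ‖T x - x‖ < 1 / ((n : ℝ) + 1) := fun n =>
    aux_approx K x₀ hx₀ hCnorm hclosed hconv T hTmaps hTnonexp (by positivity)
  choose x hxK hxfix using happrox
  obtain ⟨g, hgK, φ, hφ, hloc⟩ := hmc x hxK
  obtain ⟨ψ, hψ, hae⟩ := aux_ae μ (fun k => x (φ k)) g hloc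
  set y : ℕ → Lp ℝ 1 μ := fun k => x (φ (ψ k)) with hy
  have hyK : ∀ k, y k ∈ K := fun k => hxK _
  -- dominated convergence
  have h1 : ∀ k, ‖y k - T g‖ - ‖y k - g‖
      = ∫ a, (|y k a - T g a| - |y k a - g a|) ∂μ := by
    intro k
    rw [aux_norm_sub μ (y k) (T g), aux_norm_sub μ (y k) g,
      ← integral_sub (aux_abs_int μ (y k) (T g)) (aux_abs_int μ (y k) g)]
  have hDCT : Tendsto (fun k => ‖y k - T g‖ - ‖y k - g‖) atTop (𝓝 ‖g - T g‖) := by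
    simp_rw [h1, aux_norm_sub μ g (T g)]
    refine tendsto_integral_of_dominated_convergence (fun a => |g a - T g a|)
      (fun k => ((aux_abs_int μ (y k) (T g)).sub (aux_abs_int μ (y k) g)).aestronglyMeasurable)
      (aux_abs_int μ g (T g)) (fun k => ?_) ?_
    · filter_upwards with a
      have hring : (y k a - T g a) - (y k a - g a) = g a - T g a := by ring
      calc ‖|y k a - T g a| - |y k a - g a|‖
          = abs (|y k a - T g a| - |y k a - g a|) := Real.norm_eq_abs _
        _ ≤ |(y k a - T g a) - (y k a - g a)| := abs_abs_sub_abs_le_abs_sub _ _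
        _ = |g a - T g a| := by rw [hring]
    · filter_upwards [hae] with a ha
      have h2 : Tendsto (fun k => |y k a - T g a|) atTop (𝓝 |g a - T g a|) :=
        (ha.sub_const (T g a)).abs
      have h3 : Tendsto (fun k => |y k a - g a|) atTop (𝓝 |g a - g a|) :=
        (ha.sub_const (g a)).abs
      simpa using h2.sub h3
  -- the upper bound
  have hle : ∀ k, ‖y k - T g‖ - ‖y k - g‖ ≤ 1 / ((k : ℝ) + 1) := by
    intro k
    have htri : ‖y k - T g‖ ≤ ‖y k - T (y k)‖ + ‖T (y k) - T g‖ := by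
      have := norm_sub_le_norm_sub_add_norm_sub (y k) (T (y k)) (T g)
      exact this
    have hfix' : ‖y k - T (y k)‖ < 1 / ((k : ℝ) + 1) := by
      have hk : (k : ℝ) + 1 ≤ (φ (ψ k) : ℝ) + 1 := by
        have : k ≤ φ (ψ k) := le_trans hψ.le_apply hφ.le_apply
        exact_mod_cast Nat.succ_le_succ this
      calc ‖y k - T (y k)‖ = ‖T (y k) - y k‖ := norm_sub_rev _ _
        _ < 1 / ((φ (ψ k) : ℝ) + 1) := hxfix _
        _ ≤ 1 / ((k : ℝ) + 1) := by
            apply one_div_le_one_div_of_le (by positivity) hk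
    have hnonexp : ‖T (y k) - T g‖ ≤ ‖y k - g‖ := hTnonexp _ (hyK k) _ hgK
    linarith
  have hfinal : ‖g - T g‖ ≤ 0 := by
    have hz : Tendsto (fun k : ℕ => 1 / ((k : ℝ) + 1)) atTop (𝓝 0) :=
      tendsto_one_div_add_atTop_nhds_zero_nat
    exact le_of_tendsto_of_tendsto' hDCT hz hle
  exact ⟨g, hgK, (sub_eq_zero.mp (norm_le_zero_iff.mp hfinal)).symm⟩
end
end
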